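/- Let α > 0 and let φ be the cardinal hyperbolic GB-splines with phase α. Define, for p ≥ 2, f_p^{H_α}(θ) := −φ̈ p ((p+1)/2) − 2·Σ_{k=1}^{⌊p/2⌋} φ̈ p ((p+1)/2 − k)·cos(kθ), where φ̈ p is the second derivative of t ↦ φ p t. Then for every integer p ≥ 4 and every θ ∈ [−π, π]: f_p^{H_α}(θ) ≤ 2 − 2·cos θ. -/

import Mathlib

open Real MeasureTheory intervalIntegral


-- index gymnastics helpers
lemma sum_Icc_reflect (f : ℤ → ℝ) (a b e : ℤ) :
    ∑ j ∈ Finset.Icc a b, f (e - j) = ∑ j ∈ Finset.Icc (e - b) (e - a), f j := by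
  apply Finset.sum_nbij' (fun j => e - j) (fun j => e - j)
  · intro x hx; simp only [Finset.mem_Icc] at *; omega
  · intro x hx; simp only [Finset.mem_Icc] at *; omega
  · intro x hx; omega
  · intro x hx; omega
  · intro x hx; rfl

lemma sum_Icc_shift (f : ℤ → ℝ) (a b e : ℤ) :
    ∑ j ∈ Finset.Icc a b, f (j + e) = ∑ j ∈ Finset.Icc (a + e) (b + e), f j := by
  apply Finset.sum_nbij' (fun j => j + e) (fun j => j - e)
  · intro x hx; simp only [Finset.mem_Icc] at *; omega
  · intro x hx; simp only [Finset.mem_Icc] at *; omega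
  · intro x hx; omega
  · intro x hx; omega
  · intro x hx; rfl

section Phi1
variable {α : ℝ} {φ : ℕ → ℝ → ℝ}
  (hα : 0 < α)
  (hφ1 : ∀ t : ℝ, φ 1 t =
      if 0 ≤ t ∧ t < 1 then α / (2 * (Real.cosh α - 1)) * Real.sinh (α * t)
      else if 1 ≤ t ∧ t < 2 then α / (2 * (Real.cosh α - 1)) * Real.sinh (α * (2 - t))
      else 0)

include hα in
lemma coshpos : 0 < Real.cosh α - 1 := by
  have := (Real.one_lt_cosh (x := α)).mpr (ne_of_gt hα)
  linarith

include hφ1 in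
lemma phi1_zero_left : ∀ t : ℝ, t ≤ 0 → φ 1 t = 0 := by
  intro t ht
  rw [hφ1]
  rcases lt_or_eq_of_le ht with h | h
  · rw [if_neg (by push_neg; intro h1; linarith), if_neg (by push_neg; intro h1; linarith)]
  · subst h; simp

include hφ1 in
lemma phi1_zero_right : ∀ t : ℝ, 2 ≤ t → φ 1 t = 0 := by
  intro t ht
  rw [hφ1, if_neg (by push_neg; intro h1; linarith), if_neg (by push_neg; intro h1; linarith)]

include hα hφ1 in
lemma phi1_nonneg : ∀ t : ℝ, 0 ≤ φ 1 t := by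
  have hc : 0 < Real.cosh α - 1 := coshpos hα
  intro t
  rw [hφ1]
  split_ifs with h1 h2
  · exact mul_nonneg (by positivity) (Real.sinh_nonneg_iff.mpr (by nlinarith [h1.1]))
  · exact mul_nonneg (by positivity) (Real.sinh_nonneg_iff.mpr (by nlinarith [h2.2]))
  · exact le_refl 0

include hφ1 in
lemma phi1_symm : ∀ t : ℝ, φ 1 (2 - t) = φ 1 t := by
  intro t
  rcases lt_trichotomy t 0 with h | h | h
  · rw [phi1_zero_left hφ1 t h.le, phi1_zero_right hφ1 (2 - t) (by linarith)]
  · subst h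
    norm_num
    rw [phi1_zero_right hφ1 2 (by norm_num), phi1_zero_left hφ1 0 le_rfl]
  · rcases lt_trichotomy t 1 with h1 | h1 | h1
    · rw [hφ1 (2 - t), hφ1 t,
        if_neg (by push_neg; intro h'; linarith),
        if_pos ⟨by linarith, by linarith⟩, if_pos ⟨by linarith, by linarith⟩]
      ring_nf
    · subst h1; norm_num
    · rcases lt_trichotomy t 2 with h2 | h2 | h2
      · rw [hφ1 (2 - t), hφ1 t,
          if_pos ⟨by linarith, by linarith⟩,
          if_neg (by push_neg; intro h'; linarith),
          if_pos ⟨by linarith, by linarith⟩]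
      · subst h2
        norm_num
        rw [phi1_zero_left hφ1 0 le_rfl, phi1_zero_right hφ1 2 (by norm_num)]
      · rw [phi1_zero_left hφ1 (2 - t) (by linarith), phi1_zero_right hφ1 t (by linarith)]

include hφ1 in
lemma phi1_meas : Measurable (φ 1) := by
  have h : φ 1 = fun t =>
      if 0 ≤ t ∧ t < 1 then α / (2 * (Real.cosh α - 1)) * Real.sinh (α * t)
      else if 1 ≤ t ∧ t < 2 then α / (2 * (Real.cosh α - 1)) * Real.sinh (α * (2 - t))
      else 0 := funext hφ1
  rw [h]
  apply Measurable.ite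
  · exact measurableSet_Ico (a := (0:ℝ)) (b := 1)
  · exact (continuous_const.mul (Real.continuous_sinh.comp (continuous_const.mul continuous_id))).measurable
  · apply Measurable.ite
    · exact measurableSet_Ico (a := (1:ℝ)) (b := 2)
    · exact (continuous_const.mul (Real.continuous_sinh.comp
        (continuous_const.mul (continuous_const.sub continuous_id)))).measurable
    · exact measurable_const

include hα hφ1 in
lemma phi1_intble : ∀ a b : ℝ, IntervalIntegrable (φ 1) volume a b := by
  intro a b
  set M := α / (2 * (Real.cosh α - 1)) * Real.sinh α with hM
  have hbd : ∀ t : ℝ, ‖φ 1 t‖ ≤ M := by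
    intro t
    rw [Real.norm_eq_abs, abs_of_nonneg (phi1_nonneg hα hφ1 t), hφ1]
    have hc : 0 < Real.cosh α - 1 := coshpos hα
    have hpos : 0 ≤ α / (2 * (Real.cosh α - 1)) := by positivity
    split_ifs with h1 h2
    · exact mul_le_mul_of_nonneg_left (Real.sinh_le_sinh.mpr (by nlinarith [h1.1, h1.2])) hpos
    · exact mul_le_mul_of_nonneg_left (Real.sinh_le_sinh.mpr (by nlinarith [h2.1, h2.2])) hpos
    · positivity
  rw [intervalIntegrable_iff]
  apply MeasureTheory.Integrable.mono' (g := fun _ => M)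
  · exact integrableOn_const measure_Ioc_lt_top.ne
  · exact (phi1_meas hφ1).aestronglyMeasurable.restrict
  · filter_upwards with t using hbd t

include hα hφ1 in
lemma phi1_integral : ∫ t in (0:ℝ)..2, φ 1 t = 1 := by
  have hc : 0 < Real.cosh α - 1 := coshpos hα
  set c : ℝ := α / (2 * (Real.cosh α - 1)) with hcdef
  have h01 : ∫ t in (0:ℝ)..1, φ 1 t = c / α * Real.cosh (α * 1) - c / α * Real.cosh (α * 0) := by
    rw [show ∫ t in (0:ℝ)..1, φ 1 t = ∫ t in (0:ℝ)..1, c * Real.sinh (α * t) by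
      apply intervalIntegral.integral_congr
      intro t ht
      rw [Set.uIcc_of_le (by norm_num : (0:ℝ) ≤ 1)] at ht
      rw [hφ1]
      rcases lt_or_eq_of_le ht.2 with h | h
      · rw [if_pos ⟨ht.1, h⟩]
      · subst h; rw [if_neg (by norm_num), if_pos (by norm_num)]; norm_num]
    apply intervalIntegral.integral_eq_sub_of_hasDerivAt
      (f := fun t : ℝ => c / α * Real.cosh (α * t))
    · intro x _
      have hinner : HasDerivAt (fun t : ℝ => α * t) α x := by
        simpa using (hasDerivAt_id x).const_mul α
      have h1 : HasDerivAt (fun t : ℝ => Real.cosh (α * t)) (Real.sinh (α * x) * α) x :=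
        hinner.cosh
      have := h1.const_mul (c / α)
      convert this using 1
      · rfl
      field_simp [hα.ne']
    · exact (continuous_const.mul (Real.continuous_sinh.comp
        (continuous_const.mul continuous_id))).intervalIntegrable 0 1
  have h12 : ∫ t in (1:ℝ)..2, φ 1 t =
      (-(c / α) * Real.cosh (α * (2 - 2))) - (-(c / α) * Real.cosh (α * (2 - 1))) := by
    rw [show ∫ t in (1:ℝ)..2, φ 1 t = ∫ t in (1:ℝ)..2, c * Real.sinh (α * (2 - t)) by
      apply intervalIntegral.integral_congr
      intro t ht
      rw [Set.uIcc_of_le (by norm_num : (1:ℝ) ≤ 2)] at ht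
      rw [hφ1]
      rcases lt_or_eq_of_le ht.2 with h | h
      · rw [if_neg (by push_neg; intro h'; linarith [ht.1]), if_pos ⟨ht.1, h⟩]
      · subst h; rw [if_neg (by norm_num), if_neg (by norm_num)]; norm_num]
    apply intervalIntegral.integral_eq_sub_of_hasDerivAt
      (f := fun t : ℝ => -(c / α) * Real.cosh (α * (2 - t)))
    · intro x _
      have hinner : HasDerivAt (fun t : ℝ => α * (2 - t)) (-α) x := by
        have := ((hasDerivAt_id x).const_sub 2).const_mul α
        convert this using 1
        · rfl
        · rfl
        · rfl
        · ring
      have h1 : HasDerivAt (fun t : ℝ => Real.cosh (α * (2 - t))) (Real.sinh (α * (2 - x)) * (-α)) x :=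
        hinner.cosh
      have := h1.const_mul (-(c / α))
      convert this using 1
      · rfl
      field_simp [hα.ne']
    · exact (continuous_const.mul (Real.continuous_sinh.comp
        (continuous_const.mul (continuous_const.sub continuous_id)))).intervalIntegrable 1 2
  have := intervalIntegral.integral_add_adjacent_intervals
    (phi1_intble hα hφ1 0 1) (phi1_intble hα hφ1 1 2)
  rw [← this, h01, h12]
  norm_num
  rw [hcdef]
  field_simp
  ring

end Phi1

lemma integral_zero_of_eqOn {f : ℝ → ℝ} {a b : ℝ} (hab : a ≤ b)
    (h : ∀ s, s ∈ Set.Icc a b → f s = 0) : ∫ s in a..b, f s = 0 := by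
  rw [intervalIntegral.integral_congr (g := fun _ => (0:ℝ))
    (by rw [Set.uIcc_of_le hab]; exact fun s hs => h s hs),
    intervalIntegral.integral_zero]

def Good (φ : ℕ → ℝ → ℝ) (q : ℕ) : Prop :=
  (∀ t : ℝ, t ≤ 0 → φ q t = 0) ∧ (∀ t : ℝ, (q : ℝ) + 1 ≤ t → φ q t = 0) ∧
  (∀ t : ℝ, 0 ≤ φ q t) ∧ (∀ a b : ℝ, IntervalIntegrable (φ q) volume a b) ∧
  (∀ t : ℝ, φ q ((q : ℝ) + 1 - t) = φ q t)

section Bundle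
variable {φ : ℕ → ℝ → ℝ}
  (hrec : ∀ q : ℕ, 2 ≤ q → ∀ t : ℝ,
      φ q t = ∫ s in (0:ℝ)..t, (φ (q - 1) s - φ (q - 1) (s - 1)))

include hrec in
lemma phi_shift (q : ℕ) (hq : 1 ≤ q)
    (hint : ∀ a b : ℝ, IntervalIntegrable (φ q) volume a b)
    (hz : ∀ t : ℝ, t ≤ 0 → φ q t = 0) :
    ∀ t : ℝ, φ (q + 1) t = ∫ s in (t - 1)..t, φ q s := by
  intro t
  have h := hrec (q + 1) (by omega) t
  simp only [Nat.add_sub_cancel] at h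
  rw [h]
  have hint' : IntervalIntegrable (fun s => φ q (s - 1)) volume 0 t := by
    have := (hint (0 - 1) (t - 1)).comp_sub_right 1
    simpa using this
  rw [intervalIntegral.integral_sub (hint 0 t) hint']
  have h2 : ∫ s in (0:ℝ)..t, φ q (s - 1) = ∫ s in (-1:ℝ)..(t-1), φ q s := by
    have := intervalIntegral.integral_comp_sub_right (a := 0) (b := t) (φ q) 1
    simpa using this
  rw [h2]
  have h3 : ∫ s in ((-1):ℝ)..(0:ℝ), φ q s = 0 :=
    integral_zero_of_eqOn (by norm_num) (fun s hs => hz s hs.2)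
  rw [← intervalIntegral.integral_add_adjacent_intervals (hint (-1) 0) (hint 0 (t-1)), h3,
    zero_add, ← intervalIntegral.integral_add_adjacent_intervals (hint 0 (t-1)) (hint (t-1) t)]
  ring

include hrec in
lemma good_succ (q : ℕ) (hq : 1 ≤ q) (h : Good φ q) : Good φ (q + 1) := by
  obtain ⟨hz, hz', hn, hint, hsym⟩ := h
  have hshift := phi_shift hrec q hq hint hz
  have hcont : Continuous (φ (q + 1)) := by
    have heq : φ (q+1) = fun t => (∫ s in (0:ℝ)..t, φ q s) - ∫ s in (0:ℝ)..(t - 1), φ q s := by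
      funext t
      rw [hshift t, ← intervalIntegral.integral_interval_sub_left (hint 0 t) (hint 0 (t-1))]
    rw [heq]
    have hF : Continuous fun b => ∫ s in (0:ℝ)..b, φ q s :=
      intervalIntegral.continuous_primitive hint 0
    exact hF.sub (hF.comp (continuous_id.sub continuous_const))
  refine ⟨?_, ?_, ?_, fun a b => hcont.intervalIntegrable a b, ?_⟩
  · intro t ht
    rw [hshift t]
    exact integral_zero_of_eqOn (by linarith) (fun s hs => hz s (le_trans hs.2 ht))
  · intro t ht
    push_cast at ht
    rw [hshift t]
    exact integral_zero_of_eqOn (by linarith) (fun s hs => hz' s (by push_cast; linarith [hs.1]))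
  · intro t
    rw [hshift t]
    exact intervalIntegral.integral_nonneg (by linarith) (fun s _ => hn s)
  · intro t
    rw [hshift, hshift]
    have key : ∫ s in (t-1)..t, φ q s = ∫ s in (t-1)..t, φ q ((q:ℝ) + 1 - s) :=
      intervalIntegral.integral_congr (fun s _ => (hsym s).symm)
    rw [key, intervalIntegral.integral_comp_sub_left (φ q) ((q:ℝ) + 1)]
    have e1 : (↑(q+1):ℝ) + 1 - t - 1 = (q:ℝ) + 1 - t := by push_cast; ring
    have e2 : (↑(q+1):ℝ) + 1 - t = (q:ℝ) + 1 - (t - 1) := by push_cast; ring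
    rw [e1, e2]

end Bundle

section All
variable {α : ℝ} {φ : ℕ → ℝ → ℝ}
  (hα : 0 < α)
  (hφ1 : ∀ t : ℝ, φ 1 t =
      if 0 ≤ t ∧ t < 1 then α / (2 * (Real.cosh α - 1)) * Real.sinh (α * t)
      else if 1 ≤ t ∧ t < 2 then α / (2 * (Real.cosh α - 1)) * Real.sinh (α * (2 - t))
      else 0)
  (hrec : ∀ q : ℕ, 2 ≤ q → ∀ t : ℝ,
      φ q t = ∫ s in (0:ℝ)..t, (φ (q - 1) s - φ (q - 1) (s - 1)))

include hα hφ1 in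
lemma good_one : Good φ 1 := by
  refine ⟨phi1_zero_left hφ1, ?_, phi1_nonneg hα hφ1, phi1_intble hα hφ1, ?_⟩
  · intro t ht
    norm_num at ht
    exact phi1_zero_right hφ1 t ht
  · intro t
    have := phi1_symm hφ1 t
    norm_num
    exact this

include hα hφ1 hrec in
lemma good_all : ∀ q : ℕ, 1 ≤ q → Good φ q := by
  intro q hq
  induction q, hq using Nat.le_induction with
  | base => exact good_one hα hφ1
  | succ n hn ih => exact good_succ hrec n hn ih

include hα hφ1 hrec in
lemma cont_all : ∀ q : ℕ, 2 ≤ q → Continuous (φ q) := by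
  intro q hq
  obtain ⟨r, rfl⟩ : ∃ r, q = r + 1 := ⟨q - 1, by omega⟩
  obtain ⟨hz, hz', hn, hint, hsym⟩ := good_all hα hφ1 hrec r (by omega)
  have hshift := phi_shift hrec r (by omega) hint hz
  have heq : φ (r+1) = fun t => (∫ s in (0:ℝ)..t, φ r s) - ∫ s in (0:ℝ)..(t - 1), φ r s := by
    funext t
    rw [hshift t, ← intervalIntegral.integral_interval_sub_left (hint 0 t) (hint 0 (t-1))]
  rw [heq]
  have hF : Continuous fun b => ∫ s in (0:ℝ)..b, φ r s :=
    intervalIntegral.continuous_primitive hint 0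
  exact hF.sub (hF.comp (continuous_id.sub continuous_const))

include hα hφ1 hrec in
lemma partition : ∀ q : ℕ, 1 ≤ q →
    ((2 ≤ q → ∀ t ∈ Set.Icc (0:ℝ) 1, ∑ j ∈ Finset.range (q + 1), φ q (t + j) = 1) ∧
      ∫ s in (0:ℝ)..((q:ℝ) + 1), φ q s = 1) := by
  intro q hq
  induction q, hq using Nat.le_induction with
  | base =>
    refine ⟨fun h => absurd h (by norm_num), ?_⟩
    have := phi1_integral hα hφ1
    norm_num
    exact this
  | succ n hn ih =>
    obtain ⟨hz, hz2, hnn, hint, hsym⟩ := good_all hα hφ1 hrec n hn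
    have hshift := phi_shift hrec n hn hint hz
    have hP : ∀ t ∈ Set.Icc (0:ℝ) 1, ∑ j ∈ Finset.range (n + 2), φ (n+1) (t + j) = 1 := by
      intro t ht
      have hsum : ∑ j ∈ Finset.range (n + 2), φ (n+1) (t + j)
          = ∑ j ∈ Finset.range (n + 2), ∫ s in (t + j - 1)..(t + (j+1:ℕ) - 1), φ n s := by
        apply Finset.sum_congr rfl
        intro j _
        rw [hshift (t + j)]
        congr 1
        push_cast; ring
      rw [hsum, intervalIntegral.sum_integral_adjacent_intervals
        (a := fun j : ℕ => t + j - 1) (fun k _ => hint _ _)]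
      have e0 : t + ((0:ℕ):ℝ) - 1 = t - 1 := by push_cast; ring
      have e1 : t + ((n + 2 : ℕ):ℝ) - 1 = t + ((n:ℝ) + 1) := by push_cast; ring
      rw [e0, e1]
      have hz0 : ∫ s in (t-1)..(0:ℝ), φ n s = 0 :=
        integral_zero_of_eqOn (by linarith [ht.1, ht.2]) (fun s hs => hz s hs.2)
      have hz1 : ∫ s in ((n:ℝ)+1)..(t + ((n:ℝ)+1)), φ n s = 0 :=
        integral_zero_of_eqOn (by linarith [ht.1]) (fun s hs => hz2 s hs.1)
      rw [← intervalIntegral.integral_add_adjacent_intervals (hint (t-1) 0)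
          (hint 0 (t + ((n:ℝ)+1))), hz0, zero_add,
        ← intervalIntegral.integral_add_adjacent_intervals (hint 0 ((n:ℝ)+1))
          (hint ((n:ℝ)+1) (t + ((n:ℝ)+1))), hz1, add_zero]
      exact ih.2
    refine ⟨fun _ => hP, ?_⟩
    have hcont : Continuous (φ (n+1)) := cont_all hα hφ1 hrec (n+1) (by omega)
    have hint1 : ∀ a b : ℝ, IntervalIntegrable (φ (n+1)) volume a b :=
      fun a b => hcont.intervalIntegrable a b
    have goalcast : ((↑(n+1):ℝ) + 1) = ((n:ℝ) + 2) := by push_cast; ring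
    rw [goalcast]
    have hsplit : ∫ s in (0:ℝ)..((n:ℝ)+2), φ (n+1) s
        = ∑ j ∈ Finset.range (n + 2), ∫ s in ((j:ℕ):ℝ)..(((j+1:ℕ)):ℝ), φ (n+1) s := by
      rw [intervalIntegral.sum_integral_adjacent_intervals
        (a := fun j : ℕ => ((j:ℕ):ℝ)) (fun k _ => hint1 _ _)]
      norm_num
    rw [hsplit]
    have hpiece : ∀ j ∈ Finset.range (n + 2),
        ∫ s in ((j:ℕ):ℝ)..(((j+1:ℕ)):ℝ), φ (n+1) s
          = ∫ x in (0:ℝ)..1, φ (n+1) (x + (j:ℝ)) := by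
      intro j _
      rw [intervalIntegral.integral_comp_add_right (φ (n+1)) ((j:ℝ))]
      push_cast
      rw [zero_add, add_comm 1 (j:ℝ)]
    have hintp : ∀ j ∈ Finset.range (n+2),
        IntervalIntegrable (fun x => φ (n+1) (x + (j:ℝ))) volume 0 1 := by
      intro j _
      exact (hcont.comp (by continuity : Continuous fun x : ℝ => x + (j:ℝ))).intervalIntegrable 0 1
    rw [Finset.sum_congr rfl hpiece, ← intervalIntegral.integral_finset_sum hintp]
    have : ∫ x in (0:ℝ)..1, ∑ j ∈ Finset.range (n + 2), φ (n+1) (x + (j:ℝ))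
        = ∫ x in (0:ℝ)..1, (1:ℝ) := by
      apply intervalIntegral.integral_congr
      intro x hx
      rw [Set.uIcc_of_le (by norm_num : (0:ℝ) ≤ 1)] at hx
      exact hP x hx
    rw [this]
    simp

include hα hφ1 hrec in
lemma partition_int (q : ℕ) (hq : 2 ≤ q) (t : ℝ) (ht : t ∈ Set.Icc (0:ℝ) 1)
    (A B : ℤ) (hA : A ≤ 0) (hB : (q:ℤ) ≤ B) :
    ∑ j ∈ Finset.Icc A B, φ q (t + (j:ℝ)) = 1 := by
  obtain ⟨hz, hz2, _, _, _⟩ := good_all hα hφ1 hrec q (by omega)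
  have h1 : ∑ j ∈ Finset.Icc A B, φ q (t + (j:ℝ))
      = ∑ j ∈ Finset.Icc (0:ℤ) (q:ℤ), φ q (t + (j:ℝ)) := by
    refine (Finset.sum_subset (fun j hj => ?_) ?_).symm
    · simp only [Finset.mem_Icc] at *; omega
    · intro j hj hj2
      simp only [Finset.mem_Icc] at hj hj2
      have hcase : j ≤ -1 ∨ (q:ℤ) + 1 ≤ j := by omega
      rcases hcase with h | h
      · refine hz _ ?_
        have : (j:ℝ) ≤ -1 := by exact_mod_cast h
        linarith [ht.2]
      · refine hz2 _ ?_
        have : ((q:ℝ)) + 1 ≤ (j:ℝ) := by exact_mod_cast h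
        linarith [ht.1]
  have h2 : ∑ j ∈ Finset.Icc (0:ℤ) (q:ℤ), φ q (t + (j:ℝ))
      = ∑ j ∈ Finset.range (q+1), φ q (t + (j:ℝ)) := by
    apply Finset.sum_nbij' (fun j : ℤ => j.toNat) (fun j : ℕ => (j:ℤ))
    · intro a ha; simp only [Finset.mem_Icc, Finset.mem_range] at *; omega
    · intro a ha; simp only [Finset.mem_Icc, Finset.mem_range] at *; omega
    · intro a ha; simp only [Finset.mem_Icc] at ha; omega
    · intro a _; omega
    · intro a ha
      simp only [Finset.mem_Icc] at ha
      congr 2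
      exact_mod_cast (Int.toNat_of_nonneg ha.1).symm
  rw [h1, h2]
  exact (partition hα hφ1 hrec q (by omega)).1 hq t ht

include hα hφ1 hrec in
lemma hasDeriv_phi (q : ℕ) (hq : 3 ≤ q) :
    ∀ t : ℝ, HasDerivAt (φ q) (φ (q-1) t - φ (q-1) (t-1)) t := by
  have hcont : Continuous (φ (q-1)) := cont_all hα hφ1 hrec (q-1) (by omega)
  have hfun : φ q = fun t => ∫ s in (0:ℝ)..t, (φ (q-1) s - φ (q-1) (s-1)) :=
    funext (hrec q (by omega))
  intro t
  rw [hfun]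
  have hg : Continuous fun s => φ (q-1) s - φ (q-1) (s - 1) :=
    hcont.sub (hcont.comp (continuous_id.sub continuous_const))
  exact intervalIntegral.integral_hasDerivAt_right (hg.intervalIntegrable 0 t)
    hg.stronglyMeasurable.stronglyMeasurableAtFilter hg.continuousAt

include hα hφ1 hrec in
lemma deriv2_eq (p : ℕ) (hp : 4 ≤ p) (t : ℝ) :
    deriv (deriv (φ p)) t = φ (p-2) t - 2 * φ (p-2) (t-1) + φ (p-2) (t-2) := by
  have h1 : deriv (φ p) = fun u => φ (p-1) u - φ (p-1) (u-1) :=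
    funext fun u => (hasDeriv_phi hα hφ1 hrec p (by omega) u).deriv
  rw [h1]
  have ha : HasDerivAt (φ (p-1)) (φ (p-1-1) t - φ (p-1-1) (t-1)) t :=
    hasDeriv_phi hα hφ1 hrec (p-1) (by omega) t
  have hb0 : HasDerivAt (φ (p-1)) (φ (p-1-1) (t-1) - φ (p-1-1) (t-1-1)) (t-1) :=
    hasDeriv_phi hα hφ1 hrec (p-1) (by omega) (t-1)
  have hb : HasDerivAt (fun u => φ (p-1) (u - 1))
      ((φ (p-1-1) (t-1) - φ (p-1-1) (t-1-1)) * 1) t :=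
    hb0.comp t ((hasDerivAt_id t).sub_const 1)
  rw [(show HasDerivAt (fun u => φ (p-1) u - φ (p-1) (u - 1)) _ t from ha.sub hb).deriv, show p - 1 - 1 = p - 2 from by omega,
    show t - 1 - 1 = t - 2 from by ring]
  ring

end All

-- FINAL THEOREM (appended to main.lean)
noncomputable def fSym (φ : ℕ → ℝ → ℝ) (p : ℕ) (θ : ℝ) : ℝ :=
  -(deriv (deriv (φ p)) (((p : ℝ) + 1) / 2)) -
    2 * ∑ k ∈ Finset.Icc 1 (p / 2),
      deriv (deriv (φ p)) (((p : ℝ) + 1) / 2 - (k : ℝ)) * Real.cos ((k : ℝ) * θ)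

theorem fSym_hyp_upper (α : ℝ) (hα : 0 < α) (φ : ℕ → ℝ → ℝ)
    (hφ1 : ∀ t : ℝ, φ 1 t =
      if 0 ≤ t ∧ t < 1 then α / (2 * (Real.cosh α - 1)) * Real.sinh (α * t)
      else if 1 ≤ t ∧ t < 2 then α / (2 * (Real.cosh α - 1)) * Real.sinh (α * (2 - t))
      else 0)
    (hrec : ∀ q : ℕ, 2 ≤ q → ∀ t : ℝ,
      φ q t = ∫ s in (0:ℝ)..t, (φ (q - 1) s - φ (q - 1) (s - 1)))
    (p : ℕ) (hp : 4 ≤ p)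
    (θ : ℝ) (hθ : θ ∈ Set.Icc (-Real.pi) Real.pi) :
    fSym φ p θ ≤ 2 - 2 * Real.cos θ := by
  classical
  obtain ⟨hz, hz2, hnn, hint, hsymphi⟩ := good_all hα hφ1 hrec (p - 2) (by omega)
  set K : ℕ := p / 2 with hK
  set c : ℝ := ((p:ℝ) + 1) / 2 with hc
  have hmr : ((p - 2 : ℕ) : ℝ) = (p:ℝ) - 2 := by
    push_cast [Nat.cast_sub (by omega : 2 ≤ p)]; ring
  have hp4 : (4:ℝ) ≤ (p:ℝ) := by exact_mod_cast hp
  have hKn : 2*K ≤ p ∧ p ≤ 2*K + 1 := by constructor <;> omega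
  have hKr1 : (p:ℝ) - 1 ≤ 2*(K:ℝ) := by
    have : (p:ℝ) ≤ 2*(K:ℝ) + 1 := by exact_mod_cast hKn.2
    linarith
  have hKr2 : 2*(K:ℝ) ≤ (p:ℝ) := by exact_mod_cast hKn.1
  set ψ : ℝ → ℝ := fun t => φ (p-2) t - 2 * φ (p-2) (t-1) + φ (p-2) (t-2) with hψdef
  have hd2 : ∀ t, deriv (deriv (φ p)) t = ψ t := fun t => deriv2_eq hα hφ1 hrec p hp t
  -- ψ vanishes on nonpositives
  have hψ0 : ∀ x : ℝ, x ≤ 0 → ψ x = 0 := by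
    intro x hx
    simp only [hψdef]
    rw [hz x hx, hz (x-1) (by linarith), hz (x-2) (by linarith)]
    ring
  -- symmetry of φ (p-2) about c - 1
  have hrefl : ∀ x : ℝ, φ (p-2) x = φ (p-2) (2*c - 2 - x) := by
    intro x
    have h := hsymphi x
    rw [show ((p - 2 : ℕ):ℝ) + 1 - x = 2*c - 2 - x by rw [hmr, hc]; ring] at h
    exact h.symm
  -- symmetry of ψ about c
  have hψsym : ∀ s : ℝ, ψ (c + s) = ψ (c - s) := by
    intro s
    simp only [hψdef]
    rw [hrefl (c + s), hrefl (c + s - 1), hrefl (c + s - 2)]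
    rw [show 2*c - 2 - (c + s) = c - s - 2 by ring,
      show 2*c - 2 - (c + s - 1) = c - s - 1 by ring,
      show 2*c - 2 - (c + s - 2) = c - s by ring]
    ring
  set g : ℤ → ℝ := fun k => ψ (c - (k:ℝ)) * Real.cos ((k:ℝ) * θ) with hg
  have heven : ∀ k : ℤ, g (-k) = g k := by
    intro k
    simp only [hg, Int.cast_neg]
    rw [show c - -(k:ℝ) = c + (k:ℝ) by ring, hψsym (k:ℝ),
      show -(k:ℝ) * θ = -((k:ℝ) * θ) by ring, Real.cos_neg]
  -- g vanishes for k ≥ K + 1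
  have hgz : ∀ k : ℤ, (K:ℤ) + 1 ≤ k → g k = 0 := by
    intro k hk
    have hk2 : (p:ℤ) + 1 ≤ 2*k := by omega
    have hkr : (p:ℝ) + 1 ≤ 2*(k:ℝ) := by exact_mod_cast hk2
    rw [hg]
    simp only
    rw [hψ0 (c - (k:ℝ)) (by rw [hc]; linarith), zero_mul]
  -- Step F3: fSym as a symmetric window sum
  have hun : Finset.Icc (-(K:ℤ)-2) ((K:ℤ)+2)
      = Finset.Icc (-(K:ℤ)-2) (-1) ∪ Finset.Icc 0 ((K:ℤ)+2) := by
    ext x; simp only [Finset.mem_union, Finset.mem_Icc]; omega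
  have hdisj : Disjoint (Finset.Icc (-(K:ℤ)-2) (-1:ℤ)) (Finset.Icc (0:ℤ) ((K:ℤ)+2)) := by
    rw [Finset.disjoint_left]
    intro a ha hb
    simp only [Finset.mem_Icc] at ha hb
    omega
  have hneg : ∑ k ∈ Finset.Icc (-(K:ℤ)-2) (-1:ℤ), g k
      = ∑ k ∈ Finset.Icc (1:ℤ) ((K:ℤ)+2), g k := by
    have hr := sum_Icc_reflect g 1 ((K:ℤ)+2) 0
    rw [show (0:ℤ) - ((K:ℤ)+2) = -(K:ℤ)-2 by ring, show (0:ℤ) - 1 = -1 by ring] at hr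
    rw [← hr]
    exact Finset.sum_congr rfl (fun k _ => by rw [show (0:ℤ) - k = -k by ring, heven k])
  have h0insert : Finset.Icc (0:ℤ) ((K:ℤ)+2) = insert 0 (Finset.Icc 1 ((K:ℤ)+2)) := by
    ext x; simp only [Finset.mem_insert, Finset.mem_Icc]; omega
  have htrim : ∑ k ∈ Finset.Icc (1:ℤ) ((K:ℤ)+2), g k = ∑ k ∈ Finset.Icc (1:ℤ) (K:ℤ), g k := by
    refine (Finset.sum_subset (fun x hx => by simp only [Finset.mem_Icc] at *; omega) ?_).symm
    intro k hk hk2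
    simp only [Finset.mem_Icc] at hk hk2
    exact hgz k (by omega)
  have hwin : ∑ k ∈ Finset.Icc (-(K:ℤ)-2) ((K:ℤ)+2), g k
      = g 0 + 2 * ∑ k ∈ Finset.Icc (1:ℤ) (K:ℤ), g k := by
    rw [hun, Finset.sum_union hdisj, hneg, h0insert,
      Finset.sum_insert (by simp only [Finset.mem_Icc]; omega), htrim]
    ring
  have hcastsum : ∑ k ∈ Finset.Icc 1 (p/2), ψ (c - (k:ℕ)) * Real.cos ((k:ℕ) * θ)
      = ∑ k ∈ Finset.Icc (1:ℤ) (K:ℤ), g k := by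
    apply Finset.sum_nbij' (fun k : ℕ => (k:ℤ)) (fun k : ℤ => k.toNat)
    · intro a ha; simp only [Finset.mem_Icc] at *; omega
    · intro a ha; simp only [Finset.mem_Icc] at *; omega
    · intro a _; omega
    · intro a ha; simp only [Finset.mem_Icc] at ha; omega
    · intro a _
      simp only [hg, Int.cast_natCast]
  have hg0 : g 0 = ψ c := by simp [hg]
  have hfS : fSym φ p θ = -∑ k ∈ Finset.Icc (-(K:ℤ)-2) ((K:ℤ)+2), g k := by
    show -(deriv (deriv (φ p)) (((p : ℝ) + 1) / 2)) -
      2 * ∑ k ∈ Finset.Icc 1 (p / 2),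
        deriv (deriv (φ p)) (((p : ℝ) + 1) / 2 - (k : ℝ)) * Real.cos ((k : ℝ) * θ) = _
    rw [show ((p:ℝ) + 1) / 2 = c from hc.symm]
    rw [hd2 c, show (∑ k ∈ Finset.Icc 1 (p / 2),
        deriv (deriv (φ p)) (c - (k : ℝ)) * Real.cos ((k : ℝ) * θ))
      = ∑ k ∈ Finset.Icc 1 (p/2), ψ (c - (k:ℕ)) * Real.cos ((k:ℕ) * θ) from
        Finset.sum_congr rfl (fun k _ => by rw [hd2])]
    rw [hcastsum, hwin, hg0]
    ring
  -- Step F4: factor out (2 cos θ - 2)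
  have hzB_low : ∀ j : ℤ, j ≤ -(K:ℤ)-2 → φ (p-2) (c - 1 - (j:ℝ)) = 0 := by
    intro j hj
    have hjr : (j:ℝ) ≤ -(K:ℝ)-2 := by exact_mod_cast hj
    refine hz2 _ ?_
    rw [hmr, hc]
    linarith
  have hzB_high : ∀ j : ℤ, (K:ℤ)+2 ≤ j → φ (p-2) (c - 1 - (j:ℝ)) = 0 := by
    intro j hj
    have hjr : (K:ℝ)+2 ≤ (j:ℝ) := by exact_mod_cast hj
    refine hz _ ?_
    rw [hc]
    linarith
  have hsplitg : ∑ k ∈ Finset.Icc (-(K:ℤ)-2) ((K:ℤ)+2), g k =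
      (∑ k ∈ Finset.Icc (-(K:ℤ)-2) ((K:ℤ)+2), φ (p-2) (c - (k:ℝ)) * Real.cos ((k:ℝ)*θ))
      - 2 * (∑ k ∈ Finset.Icc (-(K:ℤ)-2) ((K:ℤ)+2), φ (p-2) (c - 1 - (k:ℝ)) * Real.cos ((k:ℝ)*θ))
      + ∑ k ∈ Finset.Icc (-(K:ℤ)-2) ((K:ℤ)+2), φ (p-2) (c - 2 - (k:ℝ)) * Real.cos ((k:ℝ)*θ) := by
    rw [Finset.mul_sum, ← Finset.sum_sub_distrib, ← Finset.sum_add_distrib]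
    refine Finset.sum_congr rfl (fun k _ => ?_)
    simp only [hg, hψdef]
    rw [show c - (k:ℝ) - 1 = c - 1 - (k:ℝ) by ring, show c - (k:ℝ) - 2 = c - 2 - (k:ℝ) by ring]
    ring
  have hS0 : ∑ k ∈ Finset.Icc (-(K:ℤ)-2) ((K:ℤ)+2), φ (p-2) (c - (k:ℝ)) * Real.cos ((k:ℝ)*θ)
      = ∑ j ∈ Finset.Icc (-(K:ℤ)-1) ((K:ℤ)+1), φ (p-2) (c - 1 - (j:ℝ)) * Real.cos (((j:ℝ)+1)*θ) := by
    have h := sum_Icc_shift (fun j : ℤ => φ (p-2) (c - 1 - (j:ℝ)) * Real.cos (((j:ℝ)+1)*θ))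
      (-(K:ℤ)-2) ((K:ℤ)+2) (-1)
    rw [show -(K:ℤ)-2 + -1 = -(K:ℤ)-3 by ring, show (K:ℤ)+2 + -1 = (K:ℤ)+1 by ring] at h
    have h2 : ∑ k ∈ Finset.Icc (-(K:ℤ)-2) ((K:ℤ)+2), φ (p-2) (c - (k:ℝ)) * Real.cos ((k:ℝ)*θ)
        = ∑ k ∈ Finset.Icc (-(K:ℤ)-2) ((K:ℤ)+2),
            (fun j : ℤ => φ (p-2) (c - 1 - (j:ℝ)) * Real.cos (((j:ℝ)+1)*θ)) (k + -1) := by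
      refine Finset.sum_congr rfl (fun k _ => ?_)
      simp only
      push_cast
      rw [show c - 1 - ((k:ℝ) + -1) = c - (k:ℝ) by ring, show (k:ℝ) + -1 + 1 = (k:ℝ) by ring]
    rw [h2, h]
    refine (Finset.sum_subset (fun x hx => by simp only [Finset.mem_Icc] at *; omega) ?_).symm
    intro j hj hj2
    simp only [Finset.mem_Icc] at hj hj2
    rw [hzB_low j (by omega), zero_mul]
  have hS1 : ∑ k ∈ Finset.Icc (-(K:ℤ)-2) ((K:ℤ)+2), φ (p-2) (c - 1 - (k:ℝ)) * Real.cos ((k:ℝ)*θ)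
      = ∑ j ∈ Finset.Icc (-(K:ℤ)-1) ((K:ℤ)+1), φ (p-2) (c - 1 - (j:ℝ)) * Real.cos ((j:ℝ)*θ) := by
    refine (Finset.sum_subset (fun x hx => by simp only [Finset.mem_Icc] at *; omega) ?_).symm
    intro j hj hj2
    simp only [Finset.mem_Icc] at hj hj2
    rcases (by omega : j ≤ -(K:ℤ)-2 ∨ (K:ℤ)+2 ≤ j) with h | h
    · rw [hzB_low j h, zero_mul]
    · rw [hzB_high j h, zero_mul]
  have hS2 : ∑ k ∈ Finset.Icc (-(K:ℤ)-2) ((K:ℤ)+2), φ (p-2) (c - 2 - (k:ℝ)) * Real.cos ((k:ℝ)*θ)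
      = ∑ j ∈ Finset.Icc (-(K:ℤ)-1) ((K:ℤ)+1), φ (p-2) (c - 1 - (j:ℝ)) * Real.cos (((j:ℝ)-1)*θ) := by
    have h := sum_Icc_shift (fun j : ℤ => φ (p-2) (c - 1 - (j:ℝ)) * Real.cos (((j:ℝ)-1)*θ))
      (-(K:ℤ)-2) ((K:ℤ)+2) 1
    rw [show -(K:ℤ)-2 + 1 = -(K:ℤ)-1 by ring] at h
    have h2 : ∑ k ∈ Finset.Icc (-(K:ℤ)-2) ((K:ℤ)+2), φ (p-2) (c - 2 - (k:ℝ)) * Real.cos ((k:ℝ)*θ)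
        = ∑ k ∈ Finset.Icc (-(K:ℤ)-2) ((K:ℤ)+2),
            (fun j : ℤ => φ (p-2) (c - 1 - (j:ℝ)) * Real.cos (((j:ℝ)-1)*θ)) (k + 1) := by
      refine Finset.sum_congr rfl (fun k _ => ?_)
      simp only
      push_cast
      rw [show c - 1 - ((k:ℝ) + 1) = c - 2 - (k:ℝ) by ring, show (k:ℝ) + 1 - 1 = (k:ℝ) by ring]
    rw [h2, h]
    refine (Finset.sum_subset (fun x hx => by simp only [Finset.mem_Icc] at *; omega) ?_).symm
    intro j hj hj2
    simp only [Finset.mem_Icc] at hj hj2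
    rw [hzB_high j (by omega), zero_mul]
  have hbig : ∑ k ∈ Finset.Icc (-(K:ℤ)-2) ((K:ℤ)+2), g k
      = (2*Real.cos θ - 2) *
        ∑ j ∈ Finset.Icc (-(K:ℤ)-1) ((K:ℤ)+1), φ (p-2) (c - 1 - (j:ℝ)) * Real.cos ((j:ℝ)*θ) := by
    rw [hsplitg, hS0, hS1, hS2, Finset.mul_sum, Finset.mul_sum, ← Finset.sum_sub_distrib,
      ← Finset.sum_add_distrib]
    refine Finset.sum_congr rfl (fun j _ => ?_)
    rw [show ((j:ℝ)+1)*θ = (j:ℝ)*θ + θ by ring, show ((j:ℝ)-1)*θ = (j:ℝ)*θ - θ by ring,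
      Real.cos_add, Real.cos_sub]
    ring
  -- Step F5: partition of unity
  have hpart : ∑ j ∈ Finset.Icc (-(K:ℤ)-1) ((K:ℤ)+1), φ (p-2) (c - 1 - (j:ℝ)) = 1 := by
    rcases Nat.even_or_odd p with he | ho
    · obtain ⟨r, hr⟩ := he
      have hpK : p = 2*K := by omega
      have hre := sum_Icc_reflect (fun i : ℤ => φ (p-2) (1/2 + (i:ℝ))) (-(K:ℤ)-1) ((K:ℤ)+1) ((K:ℤ)-1)
      rw [show (K:ℤ)-1-((K:ℤ)+1) = -2 by ring, show (K:ℤ)-1-(-(K:ℤ)-1) = 2*(K:ℤ) by ring] at hre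
      have hterm : ∀ j ∈ Finset.Icc (-(K:ℤ)-1) ((K:ℤ)+1), φ (p-2) (c - 1 - (j:ℝ))
          = (fun i : ℤ => φ (p-2) (1/2 + (i:ℝ))) ((K:ℤ)-1-j) := by
        intro j _
        simp only
        congr 1
        push_cast
        have hpr : (p:ℝ) = 2*(K:ℝ) := by exact_mod_cast hpK
        rw [hc, hpr]
        ring
      rw [Finset.sum_congr rfl hterm, hre]
      exact partition_int hα hφ1 hrec (p-2) (by omega) (1/2)
        (by constructor <;> norm_num) (-2) (2*(K:ℤ)) (by omega) (by omega)
    · obtain ⟨r, hr⟩ := ho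
      have hpK : p = 2*K + 1 := by omega
      have hre := sum_Icc_reflect (fun i : ℤ => φ (p-2) (0 + (i:ℝ))) (-(K:ℤ)-1) ((K:ℤ)+1) (K:ℤ)
      rw [show (K:ℤ)-((K:ℤ)+1) = -1 by ring, show (K:ℤ)-(-(K:ℤ)-1) = 2*(K:ℤ)+1 by ring] at hre
      have hterm : ∀ j ∈ Finset.Icc (-(K:ℤ)-1) ((K:ℤ)+1), φ (p-2) (c - 1 - (j:ℝ))
          = (fun i : ℤ => φ (p-2) (0 + (i:ℝ))) ((K:ℤ)-j) := by
        intro j _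
        simp only
        congr 1
        push_cast
        have hpr : (p:ℝ) = 2*(K:ℝ) + 1 := by exact_mod_cast hpK
        rw [hc, hpr]
        ring
      rw [Finset.sum_congr rfl hterm, hre]
      exact partition_int hα hφ1 hrec (p-2) (by omega) 0
        (by constructor <;> norm_num) (-1) (2*(K:ℤ)+1) (by omega) (by omega)
  -- Step F6: conclude
  have hT : ∑ j ∈ Finset.Icc (-(K:ℤ)-1) ((K:ℤ)+1), φ (p-2) (c - 1 - (j:ℝ)) * Real.cos ((j:ℝ)*θ) ≤ 1 := by
    calc ∑ j ∈ Finset.Icc (-(K:ℤ)-1) ((K:ℤ)+1), φ (p-2) (c - 1 - (j:ℝ)) * Real.cos ((j:ℝ)*θ)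
        ≤ ∑ j ∈ Finset.Icc (-(K:ℤ)-1) ((K:ℤ)+1), φ (p-2) (c - 1 - (j:ℝ)) :=
          Finset.sum_le_sum (fun j _ => mul_le_of_le_one_right (hnn _) (Real.cos_le_one _))
      _ = 1 := hpart
  have hcosnn : (0:ℝ) ≤ 2 - 2*Real.cos θ := by nlinarith [Real.cos_le_one θ]
  rw [hfS, hbig]
  calc -((2*Real.cos θ - 2) * ∑ j ∈ Finset.Icc (-(K:ℤ)-1) ((K:ℤ)+1),
        φ (p-2) (c - 1 - (j:ℝ)) * Real.cos ((j:ℝ)*θ))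
      = (2 - 2*Real.cos θ) * ∑ j ∈ Finset.Icc (-(K:ℤ)-1) ((K:ℤ)+1),
        φ (p-2) (c - 1 - (j:ℝ)) * Real.cos ((j:ℝ)*θ) := by ring
    _ ≤ (2 - 2*Real.cos θ) * 1 := mul_le_mul_of_nonneg_left hT hcosnn
    _ = 2 - 2*Real.cos θ := by ring
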